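/- Let ε_i ∈ [0,1] be nonincreasing with ε_m < 1 and suppose ε_i → 0 as i → ∞ (monotonically). Then the average Peak AoI of proactive HARQ, Δ_Proac^P(m) = -1 - τ_f - (τ_c + n_m + 𝒯)ε_m/(1-ε_m) + 2(τ_c + n₁ + 𝒯 + ∑_{i=1}^{m-1}(n_{i+1}-n_i)ε_i)/(1-ε_m), converges as m → ∞ to -1 - τ_f + 2(τ_c + n₁ + 𝒯 + ∑_{i=1}^{∞}(n_{i+1}-n_i)ε_i), provided the series ∑(n_{i+1}-n_i)ε_i converges and (n_m)ε_m → 0. -/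

import Mathlib

open Filter Topology Finset

/-- Rateless-codes limit of the proactive average Peak AoI: as `m → ∞`,
`Δ^P_Proac(m) = -1 - τ_f - (τ_c+n_m+𝒯)ε_m/(1-ε_m)
  + 2(τ_c+n₁+𝒯+∑_{i=1}^{m-1}(n_{i+1}-n_i)ε_i)/(1-ε_m)`
converges to `-1 - τ_f + 2(τ_c + n₁ + 𝒯 + ∑_{i=1}^∞ (n_{i+1}-n_i)ε_i)`. -/
theorem rateless_peak_aoi_limit (n ε : ℕ → ℝ) (τc T τf : ℝ) (S : ℝ)
    (hτc : 0 ≤ τc) (hT : 0 ≤ T) (hτf : 0 ≤ τf)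
    (hn : ∀ i : ℕ, 1 ≤ i → n i < n (i + 1))
    (hεmono : Antitone ε) (hε0 : ∀ i, 0 ≤ ε i) (hε1 : ∀ i, ε i ≤ 1)
    (hεm : ∀ m : ℕ, ε m < 1)
    (hεlim : Tendsto ε atTop (𝓝 0))
    (hnε : Tendsto (fun m : ℕ => n m * ε m) atTop (𝓝 0))
    (hS : Tendsto (fun N : ℕ => ∑ i ∈ Icc 1 N, (n (i + 1) - n i) * ε i) atTop (𝓝 S)) :
    Tendsto (fun m : ℕ =>
        -1 - τf - (τc + n m + T) * ε m / (1 - ε m)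
          + 2 * (τc + n 1 + T + ∑ i ∈ Icc 1 (m - 1), (n (i + 1) - n i) * ε i) / (1 - ε m))
      atTop (𝓝 (-1 - τf + 2 * (τc + n 1 + T + S))) := by
  have h1 : Tendsto (fun m : ℕ => 1 - ε m) atTop (𝓝 1) := by
    simpa using tendsto_const_nhds.sub hεlim
  have h2 : Tendsto (fun m : ℕ => (τc + n m + T) * ε m) atTop (𝓝 0) := by
    have h := ((tendsto_const_nhds.mul hεlim).add hnε :
      Tendsto (fun m : ℕ => (τc + T) * ε m + n m * ε m) atTop (𝓝 ((τc + T) * 0 + 0)))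
    have h' : Tendsto (fun m : ℕ => (τc + T) * ε m + n m * ε m) atTop (𝓝 0) := by
      simpa using h
    refine h'.congr fun m => by ring
  have h3 : Tendsto (fun m : ℕ => ∑ i ∈ Icc 1 (m - 1), (n (i + 1) - n i) * ε i)
      atTop (𝓝 S) := hS.comp (tendsto_sub_atTop_nat 1)
  have hc : Tendsto (fun _ : ℕ => -1 - τf) atTop (𝓝 (-1 - τf)) := tendsto_const_nhds
  have hc2 : Tendsto (fun _ : ℕ => (2 : ℝ)) atTop (𝓝 2) := tendsto_const_nhds
  have hc3 : Tendsto (fun _ : ℕ => τc + n 1 + T) atTop (𝓝 (τc + n 1 + T)) :=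
    tendsto_const_nhds
  have hmain := (hc.sub (h2.div h1 one_ne_zero)).add
    ((hc2.mul (hc3.add h3)).div h1 one_ne_zero)
  have heq : (-1 - τf - 0 / 1 + 2 * (τc + n 1 + T + S) / 1 : ℝ)
      = -1 - τf + 2 * (τc + n 1 + T + S) := by ring
  rw [heq] at hmain
  exact hmain
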